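/- Let μ and ν be probability measures on (0,∞), each with finite mean, and write μ̄(u) = μ((u,∞)). Let m ≥ 1, z_1,…,z_m ∈ ℝ and t_1,…,t_m ≥ 0. Then both of the following (complex-valued) Lebesgue integrals are absolutely convergent and equal: ∫_{−∞}^{∞} ∫_0^{∞} ∫_0^{∞} g(s,u,r) ds dμ(u) dν(r) = ∫_{−∞}^{∞} ∫_0^{∞} ∫_0^{∞} i·( exp( i Σ_{j=1}^m z_j r L_{t_j}(s−u,u) ) − 1 )·( Σ_{k=1}^m z_k r 1_{[0,t_k]}(s) )·μ̄(u) ds du dν(r). -/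

import Mathlib

open MeasureTheory Set Complex Filter
open scoped ENNReal Topology

/-- `L_t(s,u)`: the Lebesgue measure of `[0,t] ∩ [s,s+u]`. -/
noncomputable def sessLen (t s u : ℝ) : ℝ :=
  (volume (Icc 0 t ∩ Icc s (s + u))).toReal

/-- `g(s,u,r) = exp(i Σ_j z_j r L_{t_j}(s,u)) − 1 − i Σ_j z_j r L_{t_j}(s,u)`. -/
noncomputable def gfun (m : ℕ) (z t : Fin m → ℝ) (s u r : ℝ) : ℂ :=
  Complex.exp (Complex.I * ((∑ j, z j * r * sessLen (t j) s u : ℝ) : ℂ)) - 1 -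
    Complex.I * ((∑ j, z j * r * sessLen (t j) s u : ℝ) : ℂ)

noncomputable def psiP (m : ℕ) (z t : Fin m → ℝ) (r y : ℝ) : ℝ :=
  ∑ j, z j * r * (Ico (0:ℝ) (t j)).indicator (fun _ => (1:ℝ)) y

noncomputable def hfun (m : ℕ) (z t : Fin m → ℝ) (r s v : ℝ) : ℂ :=
  Complex.I * (Complex.exp (Complex.I * ((∑ j, z j * r * sessLen (t j) s v : ℝ) : ℂ)) - 1) *
    ((psiP m z t r (s + v) : ℝ) : ℂ)

lemma sessLen_eq {t : ℝ} (ht : 0 ≤ t) (s u : ℝ) :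
    sessLen t s u = max (min t (s + u) - max 0 s) 0 := by
  unfold sessLen
  rw [Icc_inter_Icc, Real.volume_Icc]
  rcases le_total (min t (s + u) - max 0 s) 0 with h | h
  · rw [max_eq_right h]
    simp [ENNReal.ofReal_eq_zero.2 h]
  · rw [max_eq_left h, ENNReal.toReal_ofReal h]

lemma sessLen_nonneg (t s u : ℝ) : 0 ≤ sessLen t s u := ENNReal.toReal_nonneg

lemma sessLen_le_left {t : ℝ} (ht : 0 ≤ t) (s u : ℝ) : sessLen t s u ≤ t := by
  rw [sessLen_eq ht]
  refine max_le ?_ ht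
  have h1 : min t (s + u) ≤ t := min_le_left _ _
  have h2 : (0:ℝ) ≤ max 0 s := le_max_left _ _
  linarith

lemma sessLen_mono {t T : ℝ} (ht : 0 ≤ t) (hT : t ≤ T) (s u : ℝ) :
    sessLen t s u ≤ sessLen T s u := by
  rw [sessLen_eq ht, sessLen_eq (ht.trans hT)]
  exact max_le_max (by gcongr) le_rfl

lemma sessLen_zero_of_lt {t s u : ℝ} (h : s + u < 0) (ht : 0 ≤ t) : sessLen t s u = 0 := by
  rw [sessLen_eq ht, max_eq_right]
  have : min t (s + u) ≤ s + u := min_le_right _ _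
  have : max 0 s ≥ 0 := le_max_left _ _
  linarith

lemma sessLen_zero_of_gt {t s u : ℝ} (h : t < s) (ht : 0 ≤ t) : sessLen t s u = 0 := by
  rw [sessLen_eq ht, max_eq_right]
  have h1 : min t (s + u) ≤ t := min_le_left _ _
  have h2 : s ≤ max 0 s := le_max_right _ _
  linarith

lemma sessLen_zero_right {t : ℝ} (ht : 0 ≤ t) (s : ℝ) : sessLen t s 0 = 0 := by
  rw [sessLen_eq ht, max_eq_right]
  have h1 : min t (s + 0) ≤ s + 0 := min_le_right _ _
  have h2 : s ≤ max 0 s := le_max_right _ _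
  linarith

lemma sessLen_continuous {t : ℝ} (ht : 0 ≤ t) :
    Continuous (fun p : ℝ × ℝ => sessLen t p.1 p.2) := by
  have : (fun p : ℝ × ℝ => sessLen t p.1 p.2)
      = fun p : ℝ × ℝ => max (min t (p.1 + p.2) - max 0 p.1) 0 := by
    funext p; exact sessLen_eq ht p.1 p.2
  rw [this]; fun_prop

/-- `sessLen t s u ≤ t · 1_{[-u, t]}(s)`. -/
lemma sessLen_le_indicator {t : ℝ} (ht : 0 ≤ t) (s u : ℝ) :
    sessLen t s u ≤ t * (Icc (-u) t).indicator (fun _ => (1:ℝ)) s := by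
  by_cases hs : s ∈ Icc (-u) t
  · simp only [indicator_of_mem hs, mul_one]; exact sessLen_le_left ht s u
  · simp only [indicator_of_notMem hs, mul_zero]
    rw [mem_Icc, not_and_or] at hs
    rcases hs with h | h
    · exact le_of_eq (sessLen_zero_of_lt (by push_neg at h; linarith) ht)
    · exact le_of_eq (sessLen_zero_of_gt (by push_neg at h; exact h) ht)

/-- Right derivative of `u ↦ sessLen t s u` at `v > 0` is `1_{[0,t)}(s+v)`. -/
lemma sessLen_hasDerivWithinAt {t : ℝ} (ht : 0 ≤ t) (s : ℝ) {v : ℝ} (hv : 0 < v) :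
    HasDerivWithinAt (fun u => sessLen t s u)
      ((Ico (0:ℝ) t).indicator (fun _ => (1:ℝ)) (s + v)) (Ioi v) v := by
  have hfor : (fun u => sessLen t s u) = fun u => max (min t (s + u) - max 0 s) 0 := by
    funext u; exact sessLen_eq ht s u
  rw [hfor]
  have hcont : Continuous fun w : ℝ => s + w := continuous_const.add continuous_id
  have hconst : ∀ {w : ℝ}, t ≤ s + w →
      max (min t (s + w) - max 0 s) 0 = max (t - max 0 s) 0 := fun {w} hw => by
    rw [min_eq_left hw]
  rcases lt_trichotomy (s + v) 0 with h0 | h0 | h0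
  · -- s+v < 0 : locally f = 0
    have hind : (Ico (0:ℝ) t).indicator (fun _ => (1:ℝ)) (s + v) = 0 :=
      indicator_of_notMem (fun hmem => absurd hmem.1 (by linarith)) _
    rw [hind]
    have hz : ∀ {w : ℝ}, s + w < 0 → max (min t (s + w) - max 0 s) 0 = 0 := fun {w} hw => by
      have h1 : min t (s + w) ≤ s + w := min_le_right _ _
      have h2 : (0:ℝ) ≤ max 0 s := le_max_left _ _
      exact max_eq_right (by linarith)
    have hev : ∀ᶠ w in 𝓝[>] v, max (min t (s + w) - max 0 s) 0 = (0:ℝ) := by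
      filter_upwards [nhdsWithin_le_nhds ((hcont.tendsto v).eventually_lt_const h0)] with w hw
      exact hz hw
    exact (hasDerivWithinAt_const v _ (0:ℝ)).congr_of_eventuallyEq hev (hz h0)
  · -- s + v = 0
    have hmax : max 0 s = 0 := max_eq_left (by linarith)
    rcases ht.eq_or_lt with h't | h't
    · -- t = 0 : f ≡ 0
      have hind : (Ico (0:ℝ) t).indicator (fun _ => (1:ℝ)) (s + v) = 0 := by
        rw [← h't]; simp
      rw [hind]
      have hfz : (fun u => max (min t (s + u) - max 0 s) 0) = fun _ => (0:ℝ) := by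
        funext w
        have h1 : min t (s + w) ≤ t := min_le_left _ _
        have h2 : (0:ℝ) ≤ max 0 s := le_max_left _ _
        exact max_eq_right (by linarith [h't])
      rw [hfz]; exact hasDerivWithinAt_const v _ (0:ℝ)
    · -- t > 0 : locally (to the right) f w = s + w
      have hind : (Ico (0:ℝ) t).indicator (fun _ => (1:ℝ)) (s + v) = 1 :=
        indicator_of_mem (show s + v ∈ Ico (0:ℝ) t from ⟨h0.ge, by linarith⟩) _
      rw [hind]
      have hev : ∀ᶠ w in 𝓝[>] v, max (min t (s + w) - max 0 s) 0 = s + w := by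
        have e1 : ∀ᶠ w in 𝓝[>] v, s + w < t :=
          nhdsWithin_le_nhds ((hcont.tendsto v).eventually_lt_const (by linarith))
        filter_upwards [e1, self_mem_nhdsWithin] with w hw1 (hw2 : v < w)
        rw [hmax, sub_zero, min_eq_right hw1.le, max_eq_left (by linarith)]
      have hbase : HasDerivWithinAt (fun w : ℝ => s + w) 1 (Ioi v) v :=
        ((hasDerivAt_id v).const_add s).hasDerivWithinAt
      refine hbase.congr_of_eventuallyEq hev ?_
      rw [hmax, sub_zero, h0, min_eq_right ht, max_self, ← h0]
  · rcases lt_trichotomy (s + v) t with h1 | h1 | h1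
    · -- 0 < s+v < t : locally f w = s + w - max 0 s
      have hind : (Ico (0:ℝ) t).indicator (fun _ => (1:ℝ)) (s + v) = 1 :=
        indicator_of_mem (show s + v ∈ Ico (0:ℝ) t from ⟨h0.le, h1⟩) _
      rw [hind]
      have hmax : max 0 s < s + v := by
        rcases le_total s 0 with h | h
        · rw [max_eq_left h]; exact h0
        · rw [max_eq_right h]; linarith
      have hloc : ∀ {w : ℝ}, s + w < t → max 0 s < s + w →
          max (min t (s + w) - max 0 s) 0 = s + w - max 0 s := fun {w} hw1 hw2 => by
        rw [min_eq_right hw1.le, max_eq_left (by linarith)]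
      have hev : ∀ᶠ w in 𝓝[>] v, max (min t (s + w) - max 0 s) 0 = s + w - max 0 s := by
        have e1 : ∀ᶠ w in 𝓝 v, s + w < t := (hcont.tendsto v).eventually_lt_const h1
        have e2 : ∀ᶠ w in 𝓝 v, max 0 s < s + w := (hcont.tendsto v).eventually_const_lt hmax
        filter_upwards [nhdsWithin_le_nhds (e1.and e2)] with w hw
        exact hloc hw.1 hw.2
      have hbase : HasDerivWithinAt (fun w : ℝ => s + w - max 0 s) 1 (Ioi v) v := by
        simpa using (((hasDerivAt_id v).const_add s).sub_const (max 0 s)).hasDerivWithinAt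
      exact hbase.congr_of_eventuallyEq hev (hloc h1 hmax)
    · -- s+v = t : to the right, f w = const
      have hind : (Ico (0:ℝ) t).indicator (fun _ => (1:ℝ)) (s + v) = 0 :=
        indicator_of_notMem (fun hmem => absurd hmem.2 (by rw [h1]; exact lt_irrefl t)) _
      rw [hind]
      have hev : ∀ᶠ w in 𝓝[>] v, max (min t (s + w) - max 0 s) 0 = max (t - max 0 s) 0 := by
        filter_upwards [self_mem_nhdsWithin] with w (hw : v < w)
        exact hconst (by linarith)
      exact (hasDerivWithinAt_const v _ _).congr_of_eventuallyEq hev (hconst h1.ge)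
    · -- s+v > t : locally f w = const
      have hind : (Ico (0:ℝ) t).indicator (fun _ => (1:ℝ)) (s + v) = 0 :=
        indicator_of_notMem (fun hmem => absurd hmem.2 (by linarith)) _
      rw [hind]
      have hev : ∀ᶠ w in 𝓝[>] v, max (min t (s + w) - max 0 s) 0 = max (t - max 0 s) 0 := by
        filter_upwards [nhdsWithin_le_nhds ((hcont.tendsto v).eventually_const_lt h1)] with w hw
        exact hconst hw.le
      exact (hasDerivWithinAt_const v _ _).congr_of_eventuallyEq hev (hconst h1.le)

lemma abs_psiP_le (m : ℕ) (z t : Fin m → ℝ) (r y : ℝ) :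
    |psiP m z t r y| ≤ (∑ j, |z j|) * |r| := by
  refine (Finset.abs_sum_le_sum_abs _ _).trans ?_
  rw [Finset.sum_mul]
  refine Finset.sum_le_sum fun j _ => ?_
  rw [abs_mul, abs_mul]
  have : |(Ico (0:ℝ) (t j)).indicator (fun _ => (1:ℝ)) y| ≤ 1 := by
    by_cases h : y ∈ Ico (0:ℝ) (t j) <;> simp [h]
  calc |z j| * |r| * |(Ico (0:ℝ) (t j)).indicator (fun _ => (1:ℝ)) y|
      ≤ |z j| * |r| * 1 := by gcongr
    _ = |z j| * |r| := mul_one _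

lemma norm_exp_I_mul (x : ℝ) : ‖Complex.exp (Complex.I * (x:ℂ))‖ = 1 := by
  rw [Complex.norm_exp]
  simp [Complex.mul_re]

lemma norm_aux (x p : ℝ) :
    ‖Complex.I * (Complex.exp (Complex.I * (x:ℂ)) - 1) * ((p:ℝ):ℂ)‖ ≤ 2 * |p| := by
  rw [norm_mul, norm_mul, Complex.norm_I, one_mul, Complex.norm_real, Real.norm_eq_abs]
  have h2 : ‖Complex.exp (Complex.I * (x:ℂ)) - 1‖ ≤ 2 := by
    refine (norm_sub_le _ _).trans ?_
    rw [norm_exp_I_mul]; norm_num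
  gcongr

lemma norm_hfun_le (m : ℕ) (z t : Fin m → ℝ) (r s v : ℝ) :
    ‖hfun m z t r s v‖ ≤ 2 * ((∑ j, |z j|) * |r|) := by
  refine (norm_aux _ _).trans ?_
  have := abs_psiP_le m z t r (s + v)
  linarith

lemma psiP_measurable (m : ℕ) (z t : Fin m → ℝ) (r : ℝ) : Measurable (psiP m z t r) := by
  unfold psiP
  exact Finset.measurable_sum _ fun j _ =>
    (measurable_const.indicator measurableSet_Ico).const_mul _

/-- FTC step: for `u ≥ 0`, `gfun m z t s u r = ∫ v in Ioo 0 u, hfun m z t r s v`. -/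
lemma gfun_eq_integral (m : ℕ) (z t : Fin m → ℝ) (ht : ∀ j, 0 ≤ t j) (s r : ℝ)
    {u : ℝ} (hu : 0 ≤ u) :
    gfun m z t s u r = ∫ v in Ioo (0:ℝ) u, hfun m z t r s v := by
  set Φ : ℝ → ℝ := fun v => ∑ j, z j * r * sessLen (t j) s v with hΦ
  set F : ℝ → ℂ := fun v => Complex.exp (Complex.I * (Φ v : ℂ)) - 1 - Complex.I * (Φ v : ℂ)
    with hF
  have hΦcont : Continuous Φ := by
    apply continuous_finset_sum
    intro j _
    exact continuous_const.mul
      ((sessLen_continuous (ht j)).comp (continuous_const.prodMk continuous_id))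
  have hFcont : Continuous F := by fun_prop
  have hmeas : Measurable fun v => hfun m z t r s v := by
    apply Measurable.mul
    · apply Measurable.const_mul
      exact ((Complex.continuous_exp.comp
        (continuous_const.mul (Complex.continuous_ofReal.comp hΦcont))).sub
          continuous_const).measurable
    · exact Complex.measurable_ofReal.comp
        ((psiP_measurable m z t r).comp (measurable_const.add measurable_id))
  have hint : IntervalIntegrable (fun v => hfun m z t r s v) volume 0 u := by
    rw [intervalIntegrable_iff]
    refine Integrable.mono' (integrableOn_const ?_) hmeas.aestronglyMeasurable
      (Filter.Eventually.of_forall fun v => norm_hfun_le m z t r s v)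
    rw [uIoc_of_le hu, Real.volume_Ioc]
    exact ENNReal.ofReal_ne_top
  have hderiv : ∀ v ∈ Ioo (0:ℝ) u, HasDerivWithinAt F (hfun m z t r s v) (Ioi v) v := by
    intro v hv
    have hΦd : HasDerivWithinAt Φ (psiP m z t r (s + v)) (Ioi v) v := by
      unfold psiP
      exact HasDerivWithinAt.fun_sum fun j _ =>
        (sessLen_hasDerivWithinAt (ht j) s hv.1).const_mul (z j * r)
    have hΦdC : HasDerivWithinAt (fun w => ((Φ w : ℝ) : ℂ))
        ((psiP m z t r (s + v) : ℝ) : ℂ) (Ioi v) v := by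
      simpa [Function.comp_def] using Complex.ofRealCLM.hasDerivAt.scomp_hasDerivWithinAt v hΦd
    have hexp := ((hΦdC.const_mul Complex.I).cexp).sub_const 1
    have hall := hexp.sub (hΦdC.const_mul Complex.I)
    refine hall.congr_deriv ?_
    unfold hfun
    ring
  have key := intervalIntegral.integral_eq_sub_of_hasDeriv_right_of_le hu
    hFcont.continuousOn hderiv hint
  have hΦ0 : Φ 0 = 0 := by
    rw [hΦ]
    exact Finset.sum_eq_zero fun j _ => by rw [sessLen_zero_right (ht j), mul_zero]
  have hF0 : F 0 = 0 := by
    rw [hF]; simp [hΦ0]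
  have hFu : gfun m z t s u r = F u := rfl
  rw [hFu, ← sub_zero (F u), ← hF0, ← key, intervalIntegral.integral_of_le hu,
    integral_Ioc_eq_integral_Ioo]

lemma ae_pos_of_Iic_zero {μ : Measure ℝ} (hμ0 : μ (Iic 0) = 0) : ∀ᵐ x ∂μ, 0 < x := by
  rw [ae_iff]
  refine measure_mono_null ?_ hμ0
  intro x hx
  simpa using not_lt.1 hx

lemma lintegral_ofReal_lt_top {μ : Measure ℝ} (hμmean : Integrable (fun x : ℝ => x) μ) :
    ∫⁻ x, ENNReal.ofReal x ∂μ < ⊤ := by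
  refine lt_of_le_of_lt (lintegral_mono fun x => ?_) hμmean.2
  rw [Real.enorm_eq_ofReal_abs]
  exact ENNReal.ofReal_le_ofReal (le_abs_self x)

lemma mubar_measurable (μ : Measure ℝ) : Measurable fun v : ℝ => (μ (Ioi v)).toReal :=
  (Antitone.measurable (fun _ _ hab => measure_mono (Ioi_subset_Ioi hab))).ennreal_toReal

lemma mubar_integrable {μ : Measure ℝ} (hμ0 : μ (Iic 0) = 0)
    (hμmean : Integrable (fun x : ℝ => x) μ) :
    Integrable (fun v => (μ (Ioi v)).toReal) (volume.restrict (Ioi (0:ℝ))) := by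
  refine ⟨(mubar_measurable μ).aestronglyMeasurable, ?_⟩
  have key : ∫⁻ v in Ioi (0:ℝ), μ (Ioi v) = ∫⁻ x, ENNReal.ofReal x ∂μ := by
    rw [lintegral_eq_lintegral_meas_lt μ
      ((ae_pos_of_Iic_zero hμ0).mono fun x hx => hx.le) aemeasurable_id]
    rfl
  refine lt_of_le_of_lt (lintegral_mono fun v => ?_)
    (key.trans_lt (lintegral_ofReal_lt_top hμmean))
  rw [Real.enorm_eq_ofReal (ENNReal.toReal_nonneg)]
  exact ENNReal.ofReal_toReal_le

lemma gfun_continuous (m : ℕ) (z t : Fin m → ℝ) (ht : ∀ j, 0 ≤ t j) :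
    Continuous fun q : ℝ × ℝ × ℝ => gfun m z t q.1 q.2.1 q.2.2 := by
  have hsum : Continuous fun q : ℝ × ℝ × ℝ => (∑ j, z j * q.2.2 * sessLen (t j) q.1 q.2.1) :=
    continuous_finset_sum _ fun j _ =>
      (continuous_const.mul (continuous_snd.comp continuous_snd)).mul
        ((sessLen_continuous (ht j)).comp
          (continuous_fst.prodMk (continuous_fst.comp continuous_snd)))
  unfold gfun
  fun_prop

lemma t_le_T {m : ℕ} {t : Fin m → ℝ} (ht : ∀ j, 0 ≤ t j) (j : Fin m) : t j ≤ ∑ k, t k :=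
  Finset.single_le_sum (fun k _ => ht k) (Finset.mem_univ j)

lemma abs_sum_le {m : ℕ} (z t : Fin m → ℝ) (ht : ∀ j, 0 ≤ t j) (s u r : ℝ) :
    |∑ j, z j * r * sessLen (t j) s u| ≤ (∑ j, |z j|) * |r| * (∑ j, t j) := by
  refine (Finset.abs_sum_le_sum_abs _ _).trans ?_
  rw [Finset.sum_mul, Finset.sum_mul]
  refine Finset.sum_le_sum fun j _ => ?_
  rw [abs_mul, abs_mul, _root_.abs_of_nonneg (sessLen_nonneg _ _ _)]
  have h1 : sessLen (t j) s u ≤ ∑ k, t k := (sessLen_le_left (ht j) s u).trans (t_le_T ht j)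
  have h2 : (0:ℝ) ≤ |z j| * |r| := mul_nonneg (abs_nonneg _) (abs_nonneg _)
  exact mul_le_mul_of_nonneg_left h1 h2

lemma norm_gfun_le {m : ℕ} (z t : Fin m → ℝ) (ht : ∀ j, 0 ≤ t j) (s u r : ℝ) :
    ‖gfun m z t s u r‖ ≤ (2 + (∑ j, |z j|) * |r| * (∑ j, t j)) *
      (Icc (-u) (∑ j, t j)).indicator (fun _ => (1:ℝ)) s := by
  by_cases hs : s ∈ Icc (-u) (∑ j, t j)
  · rw [indicator_of_mem hs, mul_one]
    unfold gfun
    refine (norm_sub_le _ _).trans ?_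
    have h1 : ‖Complex.exp (Complex.I * ((∑ j, z j * r * sessLen (t j) s u : ℝ) : ℂ)) - 1‖
        ≤ 2 := by
      refine (norm_sub_le _ _).trans ?_
      rw [norm_exp_I_mul]; norm_num
    have h2 : ‖Complex.I * ((∑ j, z j * r * sessLen (t j) s u : ℝ) : ℂ)‖
        ≤ (∑ j, |z j|) * |r| * (∑ j, t j) := by
      rw [norm_mul, Complex.norm_I, one_mul, Complex.norm_real, Real.norm_eq_abs]
      exact abs_sum_le z t ht s u r
    linarith
  · rw [indicator_of_notMem hs, mul_zero]
    have hz : ∀ j : Fin m, sessLen (t j) s u = 0 := by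
      intro j
      rw [mem_Icc, not_and_or] at hs
      rcases hs with h | h
      · exact sessLen_zero_of_lt (by push_neg at h; linarith) (ht j)
      · push_neg at h
        exact sessLen_zero_of_gt (lt_of_le_of_lt (t_le_T ht j) h) (ht j)
    have : (∑ j, z j * r * sessLen (t j) s u) = 0 :=
      Finset.sum_eq_zero fun j _ => by rw [hz j, mul_zero]
    unfold gfun
    rw [this]
    simp

lemma gfun_integrable {μ ν : Measure ℝ} [IsProbabilityMeasure μ] [IsProbabilityMeasure ν]
    (hμmean : Integrable (fun x : ℝ => x) μ) (hνmean : Integrable (fun x : ℝ => x) ν)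
    {m : ℕ} (z t : Fin m → ℝ) (ht : ∀ j, 0 ≤ t j) :
    Integrable (fun q : ℝ × ℝ × ℝ => gfun m z t q.1 q.2.1 q.2.2)
      (volume.prod (μ.prod ν)) := by
  set T := ∑ j, t j with hT
  set C := ∑ j, |z j| with hC
  have hT0 : 0 ≤ T := Finset.sum_nonneg fun j _ => ht j
  have hC0 : 0 ≤ C := Finset.sum_nonneg fun j _ => abs_nonneg _
  refine ⟨((gfun_continuous m z t ht).measurable).aestronglyMeasurable, ?_⟩
  -- the dominating integrable function on `μ.prod ν`
  have hdom : Integrable (fun p : ℝ × ℝ => |T + p.1| * (2 + C * |p.2| * T)) (μ.prod ν) :=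
    Integrable.mul_prod ((integrable_const T).add hμmean).abs
      ((integrable_const 2).add ((hνmean.abs.const_mul C).mul_const T))
  have h2C : ∀ r : ℝ, 0 ≤ 2 + C * |r| * T := fun r => by positivity
  have hptwise : ∀ q : ℝ × ℝ × ℝ, (‖gfun m z t q.1 q.2.1 q.2.2‖₊ : ℝ≥0∞)
      ≤ ENNReal.ofReal ((2 + C * |q.2.2| * T) *
        (Icc (-q.2.1) T).indicator (fun _ => (1:ℝ)) q.1) := by
    intro q
    rw [← enorm_eq_nnnorm, ← ofReal_norm]
    exact ENNReal.ofReal_le_ofReal (norm_gfun_le z t ht q.1 q.2.1 q.2.2)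
  show (∫⁻ q, (‖gfun m z t q.1 q.2.1 q.2.2‖₊ : ℝ≥0∞) ∂(volume.prod (μ.prod ν))) < ⊤
  refine lt_of_le_of_lt (lintegral_mono hptwise) ?_
  -- now bound the lintegral of the dominating function
  have hmeasb : Measurable fun q : ℝ × ℝ × ℝ =>
      ENNReal.ofReal ((2 + C * |q.2.2| * T) *
        (Icc (-q.2.1) T).indicator (fun _ => (1:ℝ)) q.1) := by
    apply ENNReal.measurable_ofReal.comp
    apply Measurable.mul
    · fun_prop
    · have hS : MeasurableSet ({q : ℝ × ℝ × ℝ | -q.2.1 ≤ q.1} ∩ {q | q.1 ≤ T}) :=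
        (measurableSet_le measurable_snd.fst.neg measurable_fst).inter
          (measurableSet_le measurable_fst measurable_const)
      have hrw : (fun q : ℝ × ℝ × ℝ => (Icc (-q.2.1) T).indicator (fun _ => (1:ℝ)) q.1)
          = ({q : ℝ × ℝ × ℝ | -q.2.1 ≤ q.1} ∩ {q | q.1 ≤ T}).indicator (fun _ => (1:ℝ)) := by
        funext q
        by_cases h : q.1 ∈ Icc (-q.2.1) T
        · rw [indicator_of_mem h, indicator_of_mem]
          exact ⟨h.1, h.2⟩
        · rw [indicator_of_notMem h, indicator_of_notMem]
          intro hq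
          exact h (mem_Icc.2 ⟨hq.1, hq.2⟩)
      rw [hrw]
      exact measurable_const.indicator hS
  rw [lintegral_prod_symm _ hmeasb.aemeasurable]
  have hinner : ∀ p : ℝ × ℝ, (∫⁻ s, ENNReal.ofReal ((2 + C * |p.2| * T) *
      (Icc (-p.1) T).indicator (fun _ => (1:ℝ)) s) ∂volume)
      ≤ ENNReal.ofReal (|T + p.1| * (2 + C * |p.2| * T)) := by
    intro p
    have heq : ∀ s : ℝ, ENNReal.ofReal ((2 + C * |p.2| * T) *
        (Icc (-p.1) T).indicator (fun _ => (1:ℝ)) s)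
        = (Icc (-p.1) T).indicator (fun _ => ENNReal.ofReal (2 + C * |p.2| * T)) s := by
      intro s
      by_cases h : s ∈ Icc (-p.1) T
      · rw [indicator_of_mem h, indicator_of_mem h, mul_one]
      · rw [indicator_of_notMem h, indicator_of_notMem h, mul_zero, ENNReal.ofReal_zero]
    simp_rw [heq]
    rw [lintegral_indicator measurableSet_Icc, setLIntegral_const, Real.volume_Icc]
    rw [← ENNReal.ofReal_mul (h2C p.2), mul_comm]
    exact ENNReal.ofReal_le_ofReal (by
      have : T - -p.1 ≤ |T + p.1| := by
        rw [sub_neg_eq_add]; exact le_abs_self _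
      nlinarith [h2C p.2, abs_nonneg (T + p.1)])
  refine lt_of_le_of_lt (lintegral_mono hinner) ?_
  refine lt_of_le_of_lt (lintegral_mono fun p => ?_) hdom.2
  rw [Real.enorm_eq_ofReal_abs]
  exact ENNReal.ofReal_le_ofReal (le_abs_self _)

lemma indicator_abs_le {m : ℕ} (t : Fin m → ℝ) (ht : ∀ j, 0 ≤ t j) (j : Fin m) (y : ℝ)
    {S : Set ℝ} (hS : S ⊆ Icc (0:ℝ) (∑ k, t k)) :
    S.indicator (fun _ => (1:ℝ)) y ≤ (Icc (0:ℝ) (∑ k, t k)).indicator (fun _ => (1:ℝ)) y := by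
  by_cases h : y ∈ S
  · rw [indicator_of_mem h, indicator_of_mem (hS h)]
  · rw [indicator_of_notMem h]
    by_cases h2 : y ∈ Icc (0:ℝ) (∑ k, t k) <;> simp [h2]

lemma abs_psiP_le_ind {m : ℕ} (z t : Fin m → ℝ) (ht : ∀ j, 0 ≤ t j) (r y : ℝ) :
    |psiP m z t r y| ≤ (∑ j, |z j|) * |r| * (Icc (0:ℝ) (∑ k, t k)).indicator (fun _ => (1:ℝ)) y := by
  unfold psiP
  refine (Finset.abs_sum_le_sum_abs _ _).trans ?_
  rw [Finset.sum_mul, Finset.sum_mul]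
  refine Finset.sum_le_sum fun j _ => ?_
  rw [abs_mul, abs_mul]
  have h1 : |(Ico (0:ℝ) (t j)).indicator (fun _ => (1:ℝ)) y|
      ≤ (Icc (0:ℝ) (∑ k, t k)).indicator (fun _ => (1:ℝ)) y := by
    rw [_root_.abs_of_nonneg (indicator_nonneg (fun _ _ => zero_le_one) y)]
    exact indicator_abs_le t ht j y
      (fun x hx => ⟨hx.1, hx.2.le.trans (t_le_T ht j)⟩)
  calc |z j| * |r| * |(Ico (0:ℝ) (t j)).indicator (fun _ => (1:ℝ)) y|
      ≤ |z j| * |r| * ((Icc (0:ℝ) (∑ k, t k)).indicator (fun _ => (1:ℝ)) y) := by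
        exact mul_le_mul_of_nonneg_left h1 (by positivity)
    _ = |z j| * |r| * (Icc (0:ℝ) (∑ k, t k)).indicator (fun _ => (1:ℝ)) y := rfl

lemma abs_psiIcc_le_ind {m : ℕ} (z t : Fin m → ℝ) (ht : ∀ j, 0 ≤ t j) (r y : ℝ) :
    |∑ k, z k * r * (Icc (0:ℝ) (t k)).indicator (fun _ => (1:ℝ)) y|
      ≤ (∑ j, |z j|) * |r| * (Icc (0:ℝ) (∑ k, t k)).indicator (fun _ => (1:ℝ)) y := by
  refine (Finset.abs_sum_le_sum_abs _ _).trans ?_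
  rw [Finset.sum_mul, Finset.sum_mul]
  refine Finset.sum_le_sum fun j _ => ?_
  rw [abs_mul, abs_mul]
  have h1 : |(Icc (0:ℝ) (t j)).indicator (fun _ => (1:ℝ)) y|
      ≤ (Icc (0:ℝ) (∑ k, t k)).indicator (fun _ => (1:ℝ)) y := by
    rw [_root_.abs_of_nonneg (indicator_nonneg (fun _ _ => zero_le_one) y)]
    exact indicator_abs_le t ht j y
      (fun x hx => ⟨hx.1, hx.2.trans (t_le_T ht j)⟩)
  exact mul_le_mul_of_nonneg_left h1 (by positivity)

section Glob

variable {μ ν : Measure ℝ} [IsProbabilityMeasure μ] [IsProbabilityMeasure ν]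
  {m : ℕ} (z t : Fin m → ℝ)

lemma H_measurable (ht : ∀ j, 0 ≤ t j) :
    Measurable (fun q : ℝ × ℝ × ℝ =>
      hfun m z t q.2.2 q.1 q.2.1 * (((μ (Ioi q.2.1)).toReal : ℝ) : ℂ)) := by
  apply Measurable.mul
  · unfold hfun
    apply Measurable.mul
    · apply Measurable.const_mul
      apply Measurable.sub _ measurable_const
      apply Complex.measurable_exp.comp
      apply Measurable.const_mul
      apply Complex.measurable_ofReal.comp
      apply Finset.measurable_sum
      intro j _
      exact ((measurable_snd.snd.const_mul (z j))).mul
        (((sessLen_continuous (ht j)).measurable).comp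
          (measurable_fst.prodMk measurable_snd.fst))
    · apply Complex.measurable_ofReal.comp
      unfold psiP
      apply Finset.measurable_sum
      intro j _
      exact (measurable_snd.snd.const_mul (z j)).mul
        ((measurable_const.indicator measurableSet_Ico).comp
          (measurable_fst.add measurable_snd.fst))
  · exact Complex.measurable_ofReal.comp ((mubar_measurable μ).comp measurable_snd.fst)

lemma H_integrable (hμ0 : μ (Iic 0) = 0) (hμmean : Integrable (fun x : ℝ => x) μ)
    (hνmean : Integrable (fun x : ℝ => x) ν) (ht : ∀ j, 0 ≤ t j) :
    Integrable (fun q : ℝ × ℝ × ℝ =>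
        hfun m z t q.2.2 q.1 q.2.1 * (((μ (Ioi q.2.1)).toReal : ℝ) : ℂ))
      (volume.prod ((volume.restrict (Ioi (0:ℝ))).prod ν)) := by
  set T := ∑ j, t j with hT
  set C := ∑ j, |z j| with hC
  have hT0 : 0 ≤ T := Finset.sum_nonneg fun j _ => ht j
  have hC0 : 0 ≤ C := Finset.sum_nonneg fun j _ => abs_nonneg _
  refine ⟨(H_measurable z t ht).aestronglyMeasurable, ?_⟩
  -- pointwise bound
  set B : ℝ × ℝ × ℝ → ℝ := fun q =>
    (2 * (C * |q.2.2|) * (μ (Ioi q.2.1)).toReal) *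
      (Icc (0:ℝ) T).indicator (fun _ => (1:ℝ)) (q.1 + q.2.1) with hB
  have hptwise : ∀ q : ℝ × ℝ × ℝ,
      (‖hfun m z t q.2.2 q.1 q.2.1 * (((μ (Ioi q.2.1)).toReal : ℝ) : ℂ)‖₊ : ℝ≥0∞)
      ≤ ENNReal.ofReal (B q) := by
    intro q
    rw [← enorm_eq_nnnorm, ← ofReal_norm]
    apply ENNReal.ofReal_le_ofReal
    rw [norm_mul, Complex.norm_real, Real.norm_eq_abs,
      _root_.abs_of_nonneg ENNReal.toReal_nonneg]
    have h1 : ‖hfun m z t q.2.2 q.1 q.2.1‖ ≤ 2 * |psiP m z t q.2.2 (q.1 + q.2.1)| :=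
      norm_aux _ _
    have h2 := abs_psiP_le_ind z t ht q.2.2 (q.1 + q.2.1)
    rw [hB]
    have hμ0' : (0:ℝ) ≤ (μ (Ioi q.2.1)).toReal := ENNReal.toReal_nonneg
    calc ‖hfun m z t q.2.2 q.1 q.2.1‖ * (μ (Ioi q.2.1)).toReal
        ≤ (2 * (C * |q.2.2| * (Icc (0:ℝ) T).indicator (fun _ => (1:ℝ)) (q.1 + q.2.1)))
            * (μ (Ioi q.2.1)).toReal := by
          refine mul_le_mul_of_nonneg_right (h1.trans ?_) hμ0'
          linarith
      _ = (2 * (C * |q.2.2|) * (μ (Ioi q.2.1)).toReal) *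
            (Icc (0:ℝ) T).indicator (fun _ => (1:ℝ)) (q.1 + q.2.1) := by ring
  show (∫⁻ q, (‖hfun m z t q.2.2 q.1 q.2.1 * (((μ (Ioi q.2.1)).toReal : ℝ) : ℂ)‖₊ : ℝ≥0∞)
      ∂(volume.prod ((volume.restrict (Ioi (0:ℝ))).prod ν))) < ⊤
  refine lt_of_le_of_lt (lintegral_mono hptwise) ?_
  have hBmeas : Measurable fun q : ℝ × ℝ × ℝ => ENNReal.ofReal (B q) := by
    apply ENNReal.measurable_ofReal.comp
    rw [hB]
    apply Measurable.mul
    · exact ((measurable_snd.snd.abs.const_mul C).const_mul 2).mul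
        ((mubar_measurable μ).comp measurable_snd.fst)
    · exact (measurable_const.indicator measurableSet_Icc).comp
        (measurable_fst.add measurable_snd.fst)
  rw [lintegral_prod_symm _ hBmeas.aemeasurable]
  have hinner : ∀ p : ℝ × ℝ, (∫⁻ s, ENNReal.ofReal (B (s, p)) ∂volume)
      ≤ ENNReal.ofReal ((2 * C * T * (μ (Ioi p.1)).toReal) * |p.2|) := by
    intro p
    set c : ℝ := 2 * (C * |p.2|) * (μ (Ioi p.1)).toReal with hc
    have hc0 : 0 ≤ c := by positivity
    have heq : ∀ s : ℝ, ENNReal.ofReal (B (s, p))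
        = (Icc (-p.1) (T - p.1)).indicator (fun _ => ENNReal.ofReal c) s := by
      intro s
      have hmem : (s + p.1 ∈ Icc (0:ℝ) T) ↔ (s ∈ Icc (-p.1) (T - p.1)) := by
        rw [mem_Icc, mem_Icc]
        constructor <;> intro h <;> constructor <;> linarith [h.1, h.2]
      rw [hB]
      dsimp only
      by_cases h : s ∈ Icc (-p.1) (T - p.1)
      · rw [indicator_of_mem h, indicator_of_mem (hmem.2 h), mul_one]
      · rw [indicator_of_notMem h, indicator_of_notMem (fun hm => h (hmem.1 hm)),
          mul_zero, ENNReal.ofReal_zero]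
    simp_rw [heq]
    rw [lintegral_indicator measurableSet_Icc, setLIntegral_const, Real.volume_Icc]
    have : T - p.1 - -p.1 = T := by ring
    rw [this, ← ENNReal.ofReal_mul hc0]
    apply ENNReal.ofReal_le_ofReal
    rw [hc]; ring_nf; rfl
  refine lt_of_le_of_lt (lintegral_mono hinner) ?_
  have hdom : Integrable
      (fun p : ℝ × ℝ => (2 * C * T * (μ (Ioi p.1)).toReal) * |p.2|)
      ((volume.restrict (Ioi (0:ℝ))).prod ν) :=
    Integrable.mul_prod ((mubar_integrable hμ0 hμmean).const_mul _) hνmean.abs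
  refine lt_of_le_of_lt (lintegral_mono fun p => ?_) hdom.2
  rw [Real.enorm_eq_ofReal_abs]
  exact ENNReal.ofReal_le_ofReal (le_abs_self _)

end Glob

section Glob2

variable {μ ν : Measure ℝ} [IsProbabilityMeasure μ] [IsProbabilityMeasure ν]
  {m : ℕ} (z t : Fin m → ℝ)

set_option maxHeartbeats 1000000 in
lemma R_measurable (ht : ∀ j, 0 ≤ t j) :
    Measurable (fun q : ℝ × ℝ × ℝ =>
      Complex.I *
        (Complex.exp (Complex.I *
            ((∑ j, z j * q.2.2 * sessLen (t j) (q.1 - q.2.1) q.2.1 : ℝ) : ℂ)) - 1) *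
        ((∑ k, z k * q.2.2 * (Icc (0 : ℝ) (t k)).indicator (fun _ => (1 : ℝ)) q.1 : ℝ) : ℂ) *
        (((μ (Ioi q.2.1)).toReal : ℝ) : ℂ)) := by
  apply Measurable.mul
  apply Measurable.mul
  · apply Measurable.const_mul
    apply Measurable.sub _ measurable_const
    apply Complex.measurable_exp.comp
    apply Measurable.const_mul
    apply Complex.measurable_ofReal.comp
    apply Finset.measurable_sum
    intro j _
    exact (measurable_snd.snd.const_mul (z j)).mul
      (((sessLen_continuous (ht j)).measurable).comp
        ((measurable_fst.sub measurable_snd.fst).prodMk measurable_snd.fst))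
  · apply Complex.measurable_ofReal.comp
    apply Finset.measurable_sum
    intro k _
    exact (measurable_snd.snd.const_mul (z k)).mul
      ((measurable_const.indicator measurableSet_Icc).comp measurable_fst)
  · exact Complex.measurable_ofReal.comp ((mubar_measurable μ).comp measurable_snd.fst)

set_option maxHeartbeats 1000000 in
lemma R_integrable (hμ0 : μ (Iic 0) = 0) (hμmean : Integrable (fun x : ℝ => x) μ)
    (hνmean : Integrable (fun x : ℝ => x) ν) (ht : ∀ j, 0 ≤ t j) :
    Integrable
      (fun q : ℝ × ℝ × ℝ =>
        Complex.I *
          (Complex.exp (Complex.I *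
              ((∑ j, z j * q.2.2 * sessLen (t j) (q.1 - q.2.1) q.2.1 : ℝ) : ℂ)) - 1) *
          ((∑ k, z k * q.2.2 * (Icc (0 : ℝ) (t k)).indicator (fun _ => (1 : ℝ)) q.1 : ℝ) : ℂ) *
          (((μ (Ioi q.2.1)).toReal : ℝ) : ℂ))
      (volume.prod ((volume.restrict (Ioi (0:ℝ))).prod ν)) := by
  set T := ∑ j, t j with hT
  set C := ∑ j, |z j| with hC
  have hT0 : 0 ≤ T := Finset.sum_nonneg fun j _ => ht j
  have hC0 : 0 ≤ C := Finset.sum_nonneg fun j _ => abs_nonneg _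
  have hdom : Integrable
      (fun q : ℝ × ℝ × ℝ =>
        ((2 * C) * (Icc (0:ℝ) T).indicator (fun _ => (1:ℝ)) q.1) *
          ((μ (Ioi q.2.1)).toReal * |q.2.2|))
      (volume.prod ((volume.restrict (Ioi (0:ℝ))).prod ν)) := by
    have hf1 : Integrable
        (fun s : ℝ => (2 * C) * (Icc (0:ℝ) T).indicator (fun _ => (1:ℝ)) s) volume := by
      refine Integrable.const_mul ?_ _
      refine (integrable_indicator_iff measurableSet_Icc).2 ?_
      refine integrableOn_const ?_
      rw [Real.volume_Icc]
      exact ENNReal.ofReal_ne_top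
    have hf2 : Integrable (fun p : ℝ × ℝ => (μ (Ioi p.1)).toReal * |p.2|)
        ((volume.restrict (Ioi (0:ℝ))).prod ν) :=
      Integrable.mul_prod (mubar_integrable hμ0 hμmean) hνmean.abs
    exact hf1.mul_prod hf2
  refine hdom.mono' (R_measurable z t ht).aestronglyMeasurable
    (Eventually.of_forall fun q => ?_)
  rw [norm_mul (_ * _ * _), Complex.norm_real, Real.norm_eq_abs,
    _root_.abs_of_nonneg ENNReal.toReal_nonneg]
  have h1 : ‖Complex.I *
      (Complex.exp (Complex.I *
          ((∑ j, z j * q.2.2 * sessLen (t j) (q.1 - q.2.1) q.2.1 : ℝ) : ℂ)) - 1) *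
      ((∑ k, z k * q.2.2 * (Icc (0 : ℝ) (t k)).indicator (fun _ => (1 : ℝ)) q.1 : ℝ) : ℂ)‖
      ≤ 2 * |∑ k, z k * q.2.2 * (Icc (0 : ℝ) (t k)).indicator (fun _ => (1 : ℝ)) q.1| :=
    norm_aux _ _
  have h2 := abs_psiIcc_le_ind z t ht q.2.2 q.1
  have h3 : (0:ℝ) ≤ (μ (Ioi q.2.1)).toReal := ENNReal.toReal_nonneg
  have h4 : (0:ℝ) ≤ (Icc (0:ℝ) T).indicator (fun _ => (1:ℝ)) q.1 :=
    indicator_nonneg (fun _ _ => zero_le_one) _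
  calc ‖_ * _ * _‖ * (μ (Ioi q.2.1)).toReal
      ≤ (2 * (C * |q.2.2| * (Icc (0:ℝ) T).indicator (fun _ => (1:ℝ)) q.1))
          * (μ (Ioi q.2.1)).toReal := by
        refine mul_le_mul_of_nonneg_right (h1.trans ?_) h3
        rw [hC, hT]
        linarith [h2]
    _ = ((2 * C) * (Icc (0:ℝ) T).indicator (fun _ => (1:ℝ)) q.1) *
          ((μ (Ioi q.2.1)).toReal * |q.2.2|) := by ring

end Glob2

section FixedS

variable {μ ν : Measure ℝ} [IsProbabilityMeasure μ] [IsProbabilityMeasure ν]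
  {m : ℕ} (z t : Fin m → ℝ)

lemma hfun_measurable_vr (ht : ∀ j, 0 ≤ t j) (s : ℝ) :
    Measurable fun p : ℝ × ℝ => hfun m z t p.2 s p.1 := by
  unfold hfun
  apply Measurable.mul
  · apply Measurable.const_mul
    apply Measurable.sub _ measurable_const
    apply Complex.measurable_exp.comp
    apply Measurable.const_mul
    apply Complex.measurable_ofReal.comp
    apply Finset.measurable_sum
    intro j _
    exact (measurable_snd.const_mul (z j)).mul
      (((sessLen_continuous (ht j)).measurable).comp
        (measurable_const.prodMk measurable_fst))
  · apply Complex.measurable_ofReal.comp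
    unfold psiP
    apply Finset.measurable_sum
    intro j _
    exact ((measurable_snd.const_mul (z j)).mul
      ((measurable_const.indicator measurableSet_Ico).comp (measurable_fst.const_add s)))

lemma hfun_measurable_v (ht : ∀ j, 0 ≤ t j) (s r : ℝ) :
    Measurable fun v : ℝ => hfun m z t r s v := by
  unfold hfun
  apply Measurable.mul
  · apply Measurable.const_mul
    apply Measurable.sub _ measurable_const
    apply Complex.measurable_exp.comp
    apply Measurable.const_mul
    apply Complex.measurable_ofReal.comp
    apply Finset.measurable_sum
    intro j _
    exact (((sessLen_continuous (ht j)).measurable).comp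
      (measurable_const.prodMk measurable_id)).const_mul _
  · exact Complex.measurable_ofReal.comp
      ((psiP_measurable m z t r).comp (measurable_id.const_add s))

/-- Fubini in `(u,v)` for fixed `s, r`. -/
lemma u_to_v (hμ0 : μ (Iic 0) = 0) (hμmean : Integrable (fun x : ℝ => x) μ)
    (ht : ∀ j, 0 ≤ t j) (s r : ℝ) :
    ∫ u', (∫ v, (Ioo (0:ℝ) u').indicator (fun w => hfun m z t r s w) v ∂volume) ∂μ
      = ∫ v in Ioi (0:ℝ), hfun m z t r s v * (((μ (Ioi v)).toReal : ℝ) : ℂ) := by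
  have hS : MeasurableSet ({p : ℝ × ℝ | 0 < p.2} ∩ {p : ℝ × ℝ | p.2 < p.1}) :=
    (measurableSet_lt measurable_const measurable_snd).inter
      (measurableSet_lt measurable_snd measurable_fst)
  have hKrw : (fun p : ℝ × ℝ => (Ioo (0:ℝ) p.1).indicator (fun w => hfun m z t r s w) p.2)
      = ({p : ℝ × ℝ | 0 < p.2} ∩ {p : ℝ × ℝ | p.2 < p.1}).indicator
          (fun p => hfun m z t r s p.2) := by
    funext p
    by_cases h : p.2 ∈ Ioo (0:ℝ) p.1
    · rw [indicator_of_mem h, indicator_of_mem]; exact ⟨h.1, h.2⟩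
    · rw [indicator_of_notMem h, indicator_of_notMem]
      intro hp; exact h (mem_Ioo.2 ⟨hp.1, hp.2⟩)
  have hmeasS : (μ.prod volume) ({p : ℝ × ℝ | 0 < p.2} ∩ {p : ℝ × ℝ | p.2 < p.1}) < ⊤ := by
    rw [Measure.prod_apply hS]
    have : ∀ u' : ℝ, volume (Prod.mk u' ⁻¹' ({p : ℝ × ℝ | 0 < p.2} ∩ {p : ℝ × ℝ | p.2 < p.1}))
        = ENNReal.ofReal u' := by
      intro u'
      have : Prod.mk u' ⁻¹' ({p : ℝ × ℝ | 0 < p.2} ∩ {p : ℝ × ℝ | p.2 < p.1}) = Ioo 0 u' := by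
        ext v; simp [mem_Ioo, and_comm]
      rw [this, Real.volume_Ioo, sub_zero]
    simp_rw [this]
    exact lintegral_ofReal_lt_top hμmean
  have hKint : Integrable
      (fun p : ℝ × ℝ => (Ioo (0:ℝ) p.1).indicator (fun w => hfun m z t r s w) p.2)
      (μ.prod volume) := by
    rw [hKrw]
    have hbound : Integrable
        (({p : ℝ × ℝ | 0 < p.2} ∩ {p : ℝ × ℝ | p.2 < p.1}).indicator
          (fun _ => 2 * ((∑ j, |z j|) * |r|))) (μ.prod volume) :=
      (integrable_indicator_iff hS).2 (integrableOn_const hmeasS.ne)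
    refine hbound.mono' ((((hfun_measurable_v z t ht s r).comp measurable_snd).indicator
        hS).aestronglyMeasurable) ?_
    refine Eventually.of_forall fun p => ?_
    ·
      by_cases h : p ∈ {p : ℝ × ℝ | 0 < p.2} ∩ {p : ℝ × ℝ | p.2 < p.1}
      · rw [indicator_of_mem h, indicator_of_mem h]
        exact norm_hfun_le m z t r s p.2
      · rw [indicator_of_notMem h, indicator_of_notMem h, norm_zero]
  -- swap the integrals
  have hswap := integral_integral_swap
    (f := fun u' v => (Ioo (0:ℝ) u').indicator (fun w => hfun m z t r s w) v) hKint
  rw [hswap]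
  -- compute the inner integral over u'
  have hinner : ∀ v : ℝ,
      (∫ u', (Ioo (0:ℝ) u').indicator (fun w => hfun m z t r s w) v ∂μ)
      = (Ioi (0:ℝ)).indicator
          (fun v => ((μ (Ioi v)).toReal : ℝ) • hfun m z t r s v) v := by
    intro v
    by_cases hv : 0 < v
    · have : ∀ u' : ℝ, (Ioo (0:ℝ) u').indicator (fun w => hfun m z t r s w) v
          = (Ioi v).indicator (fun _ => hfun m z t r s v) u' := by
        intro u'
        by_cases h : v < u'
        · rw [indicator_of_mem (mem_Ioo.2 ⟨hv, h⟩), indicator_of_mem (mem_Ioi.2 h)]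
        · rw [indicator_of_notMem (fun hm => h (mem_Ioo.1 hm).2),
            indicator_of_notMem (fun hm => h (mem_Ioi.1 hm))]
      simp_rw [this]
      rw [integral_indicator_const _ measurableSet_Ioi, indicator_of_mem (mem_Ioi.2 hv), measureReal_def]
    · have : ∀ u' : ℝ, (Ioo (0:ℝ) u').indicator (fun w => hfun m z t r s w) v = 0 := by
        intro u'
        exact indicator_of_notMem (fun hm => hv (mem_Ioo.1 hm).1) _
      simp_rw [this]
      rw [integral_zero, indicator_of_notMem (fun hm => hv (mem_Ioi.1 hm))]
  simp_rw [hinner]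
  rw [integral_indicator measurableSet_Ioi]
  congr 1
  funext v
  rw [real_smul, mul_comm]

lemma gfun_measurable_ur (ht : ∀ j, 0 ≤ t j) (s : ℝ) :
    Measurable fun p : ℝ × ℝ => gfun m z t s p.1 p.2 := by
  unfold gfun
  have hsum : Measurable fun p : ℝ × ℝ => ((∑ j, z j * p.2 * sessLen (t j) s p.1 : ℝ) : ℂ) := by
    apply Complex.measurable_ofReal.comp
    apply Finset.measurable_sum
    intro j _
    exact (measurable_snd.const_mul (z j)).mul
      (((sessLen_continuous (ht j)).measurable).comp (measurable_const.prodMk measurable_fst))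
  exact ((Complex.measurable_exp.comp (hsum.const_mul Complex.I)).sub
    measurable_const).sub (hsum.const_mul Complex.I)

lemma gInt_s (hνmean : Integrable (fun x : ℝ => x) ν) (ht : ∀ j, 0 ≤ t j) (s : ℝ) :
    Integrable (fun p : ℝ × ℝ => gfun m z t s p.1 p.2) (μ.prod ν) := by
  have hbound : Integrable
      (fun p : ℝ × ℝ => 2 + (∑ j, |z j|) * |p.2| * (∑ j, t j)) (μ.prod ν) := by
    have h2 : Integrable (fun p : ℝ × ℝ => (1:ℝ) * |p.2|) (μ.prod ν) :=
      Integrable.mul_prod (integrable_const 1) hνmean.abs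
    have h2' : Integrable (fun p : ℝ × ℝ => |p.2|) (μ.prod ν) := by simpa using h2
    exact (integrable_const 2).add ((h2'.const_mul _).mul_const _)
  refine hbound.mono' (gfun_measurable_ur z t ht s).aestronglyMeasurable ?_
  refine Eventually.of_forall fun p => ?_
  refine (norm_gfun_le z t ht s p.1 p.2).trans ?_
  have hC : (0:ℝ) ≤ ∑ j, |z j| := Finset.sum_nonneg fun j _ => abs_nonneg _
  have hT : (0:ℝ) ≤ ∑ j, t j := Finset.sum_nonneg fun j _ => ht j
  have hind : (Icc (-p.1) (∑ j, t j)).indicator (fun _ => (1:ℝ)) s ≤ 1 := by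
    by_cases h : s ∈ Icc (-p.1) (∑ j, t j) <;> simp [h]
  have h0 : (0:ℝ) ≤ 2 + (∑ j, |z j|) * |p.2| * (∑ j, t j) := by positivity
  calc (2 + (∑ j, |z j|) * |p.2| * (∑ j, t j)) *
        (Icc (-p.1) (∑ j, t j)).indicator (fun _ => (1:ℝ)) s
      ≤ (2 + (∑ j, |z j|) * |p.2| * (∑ j, t j)) * 1 := by
        exact mul_le_mul_of_nonneg_left hind h0
    _ = 2 + (∑ j, |z j|) * |p.2| * (∑ j, t j) := mul_one _

lemma hQint_s (hμ0 : μ (Iic 0) = 0) (hμmean : Integrable (fun x : ℝ => x) μ)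
    (hνmean : Integrable (fun x : ℝ => x) ν) (ht : ∀ j, 0 ≤ t j) (s : ℝ) :
    Integrable (fun p : ℝ × ℝ => hfun m z t p.2 s p.1 * (((μ (Ioi p.1)).toReal : ℝ) : ℂ))
      ((volume.restrict (Ioi (0:ℝ))).prod ν) := by
  have hbound : Integrable
      (fun p : ℝ × ℝ => (2 * (∑ j, |z j|) * (μ (Ioi p.1)).toReal) * |p.2|)
      ((volume.restrict (Ioi (0:ℝ))).prod ν) :=
    Integrable.mul_prod ((mubar_integrable hμ0 hμmean).const_mul _) hνmean.abs
  have hmeas : Measurable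
      (fun p : ℝ × ℝ => hfun m z t p.2 s p.1 * (((μ (Ioi p.1)).toReal : ℝ) : ℂ)) :=
    (hfun_measurable_vr z t ht s).mul
      (Complex.measurable_ofReal.comp ((mubar_measurable μ).comp measurable_fst))
  refine hbound.mono' hmeas.aestronglyMeasurable (Eventually.of_forall fun p => ?_)
  rw [norm_mul, Complex.norm_real, Real.norm_eq_abs,
    _root_.abs_of_nonneg ENNReal.toReal_nonneg]
  calc ‖hfun m z t p.2 s p.1‖ * (μ (Ioi p.1)).toReal
      ≤ (2 * ((∑ j, |z j|) * |p.2|)) * (μ (Ioi p.1)).toReal := by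
        exact mul_le_mul_of_nonneg_right (norm_hfun_le m z t p.2 s p.1) ENNReal.toReal_nonneg
    _ = (2 * (∑ j, |z j|) * (μ (Ioi p.1)).toReal) * |p.2| := by ring

/-- The key identity for fixed `s`. -/
lemma fixed_s_eq (hμ0 : μ (Iic 0) = 0) (hμmean : Integrable (fun x : ℝ => x) μ)
    (hνmean : Integrable (fun x : ℝ => x) ν) (ht : ∀ j, 0 ≤ t j) (s : ℝ) :
    ∫ p : ℝ × ℝ, gfun m z t s p.1 p.2 ∂(μ.prod ν)
      = ∫ p : ℝ × ℝ, hfun m z t p.2 s p.1 * (((μ (Ioi p.1)).toReal : ℝ) : ℂ)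
          ∂((volume.restrict (Ioi (0:ℝ))).prod ν) := by
  rw [integral_prod_symm _ (gInt_s z t hνmean ht s),
    integral_prod_symm _ (hQint_s z t hμ0 hμmean hνmean ht s)]
  refine integral_congr_ae (Eventually.of_forall fun r => ?_)
  show (∫ u', gfun m z t s u' r ∂μ)
    = ∫ v in Ioi (0:ℝ), hfun m z t r s v * (((μ (Ioi v)).toReal : ℝ) : ℂ)
  have h1 : ∀ᵐ u' ∂μ, gfun m z t s u' r
      = ∫ v, (Ioo (0:ℝ) u').indicator (fun w => hfun m z t r s w) v ∂volume := by
    refine (ae_pos_of_Iic_zero hμ0).mono fun u' hu' => ?_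
    rw [gfun_eq_integral m z t ht s r hu'.le, integral_indicator measurableSet_Ioo]
  rw [integral_congr_ae h1, u_to_v z t hμ0 hμmean ht s r]

end FixedS

section Final

variable {μ ν : Measure ℝ} [IsProbabilityMeasure μ] [IsProbabilityMeasure ν]
  {m : ℕ} (z t : Fin m → ℝ)

/-- a.e. equality of the shifted `H` with the `R` integrand. -/
lemma shifted_ae_eq (ht : ∀ j, 0 ≤ t j) :
    (fun q : ℝ × ℝ × ℝ => hfun m z t q.2.2 (q.1 - q.2.1) q.2.1 *
        (((μ (Ioi q.2.1)).toReal : ℝ) : ℂ))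
      =ᵐ[volume.prod ((volume.restrict (Ioi (0:ℝ))).prod ν)]
    (fun q : ℝ × ℝ × ℝ =>
      Complex.I *
        (Complex.exp (Complex.I *
            ((∑ j, z j * q.2.2 * sessLen (t j) (q.1 - q.2.1) q.2.1 : ℝ) : ℂ)) - 1) *
        ((∑ k, z k * q.2.2 * (Icc (0 : ℝ) (t k)).indicator (fun _ => (1 : ℝ)) q.1 : ℝ) : ℂ) *
        (((μ (Ioi q.2.1)).toReal : ℝ) : ℂ)) := by
  have hnull : (volume.prod ((volume.restrict (Ioi (0:ℝ))).prod ν))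
      ((range t) ×ˢ (univ : Set (ℝ × ℝ))) = 0 := by
    rw [Measure.prod_prod, (Set.finite_range t).measure_zero, zero_mul]
  rw [Filter.EventuallyEq, ae_iff]
  refine measure_mono_null (fun q hq => ?_) hnull
  rw [mem_prod]
  refine ⟨?_, mem_univ _⟩
  by_contra hq1
  apply hq
  show hfun m z t q.2.2 (q.1 - q.2.1) q.2.1 * (((μ (Ioi q.2.1)).toReal : ℝ) : ℂ) = _
  unfold hfun psiP
  have harg : q.1 - q.2.1 + q.2.1 = q.1 := by ring
  rw [harg]
  have hsum : (∑ j, z j * q.2.2 * (Ico (0:ℝ) (t j)).indicator (fun _ => (1:ℝ)) q.1)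
      = ∑ k, z k * q.2.2 * (Icc (0 : ℝ) (t k)).indicator (fun _ => (1 : ℝ)) q.1 := by
    refine Finset.sum_congr rfl fun j _ => ?_
    congr 1
    have hne : q.1 ≠ t j := fun h => hq1 ⟨j, h.symm⟩
    by_cases h : q.1 ∈ Ico (0:ℝ) (t j)
    · rw [indicator_of_mem h, indicator_of_mem (show q.1 ∈ Icc (0:ℝ) (t j) from ⟨h.1, h.2.le⟩)]
    · rw [indicator_of_notMem h, indicator_of_notMem]
      intro hm
      exact h (show q.1 ∈ Ico (0:ℝ) (t j) from ⟨hm.1, lt_of_le_of_ne hm.2 hne⟩)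
  rw [hsum]

theorem main_eq (hμ0 : μ (Iic 0) = 0) (hνmean : Integrable (fun x : ℝ => x) ν)
    (hμmean : Integrable (fun x : ℝ => x) μ) (ht : ∀ j, 0 ≤ t j) :
    (∫ q : ℝ × ℝ × ℝ, gfun m z t q.1 q.2.1 q.2.2 ∂(volume.prod (μ.prod ν)))
      = ∫ q : ℝ × ℝ × ℝ,
          Complex.I *
            (Complex.exp (Complex.I *
                ((∑ j, z j * q.2.2 * sessLen (t j) (q.1 - q.2.1) q.2.1 : ℝ) : ℂ)) - 1) *
            ((∑ k, z k * q.2.2 * (Icc (0 : ℝ) (t k)).indicator (fun _ => (1 : ℝ)) q.1 : ℝ) : ℂ) *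
            (((μ (Ioi q.2.1)).toReal : ℝ) : ℂ)
          ∂(volume.prod ((volume.restrict (Ioi (0:ℝ))).prod ν)) := by
  set Q : Measure (ℝ × ℝ) := (volume.restrict (Ioi (0:ℝ))).prod ν with hQ
  have hM1 := gfun_integrable hμmean hνmean z t ht
  have hMH := H_integrable z t hμ0 hμmean hνmean ht
  have hMR := R_integrable z t hμ0 hμmean hνmean ht
  have hMHT : Integrable
      (fun q : ℝ × ℝ × ℝ => hfun m z t q.2.2 (q.1 - q.2.1) q.2.1 *
        (((μ (Ioi q.2.1)).toReal : ℝ) : ℂ)) (volume.prod Q) :=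
    hMR.congr (shifted_ae_eq z t ht).symm
  calc (∫ q : ℝ × ℝ × ℝ, gfun m z t q.1 q.2.1 q.2.2 ∂(volume.prod (μ.prod ν)))
      = ∫ s, ∫ p : ℝ × ℝ, gfun m z t s p.1 p.2 ∂(μ.prod ν) ∂volume :=
        integral_prod _ hM1
    _ = ∫ s, ∫ p : ℝ × ℝ, hfun m z t p.2 s p.1 * (((μ (Ioi p.1)).toReal : ℝ) : ℂ) ∂Q
          ∂volume := by
        refine integral_congr_ae (Eventually.of_forall fun s => ?_)
        exact fixed_s_eq z t hμ0 hμmean hνmean ht s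
    _ = ∫ q : ℝ × ℝ × ℝ, hfun m z t q.2.2 q.1 q.2.1 * (((μ (Ioi q.2.1)).toReal : ℝ) : ℂ)
          ∂(volume.prod Q) := (integral_prod _ hMH).symm
    _ = ∫ p : ℝ × ℝ, ∫ s, hfun m z t p.2 s p.1 * (((μ (Ioi p.1)).toReal : ℝ) : ℂ) ∂volume
          ∂Q := integral_prod_symm _ hMH
    _ = ∫ p : ℝ × ℝ, ∫ s, hfun m z t p.2 (s - p.1) p.1 * (((μ (Ioi p.1)).toReal : ℝ) : ℂ)
          ∂volume ∂Q := by
        refine integral_congr_ae (Eventually.of_forall fun p => ?_)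
        exact (integral_sub_right_eq_self
          (fun s => hfun m z t p.2 s p.1 * (((μ (Ioi p.1)).toReal : ℝ) : ℂ)) p.1).symm
    _ = ∫ q : ℝ × ℝ × ℝ, hfun m z t q.2.2 (q.1 - q.2.1) q.2.1 *
          (((μ (Ioi q.2.1)).toReal : ℝ) : ℂ) ∂(volume.prod Q) :=
        (integral_prod_symm _ hMHT).symm
    _ = _ := integral_congr_ae (shifted_ae_eq z t ht)

end Final

/-- Integration by parts in `u` together with the change of variables `s ↦ s + u`:
`∫∫∫ g(s,u,r) ds dμ(u) dν(r)` equals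
`∫∫∫ i (exp(i Σ_j z_j r L_{t_j}(s−u,u)) − 1)(Σ_k z_k r 1_{[0,t_k]}(s)) μ̄(u) ds du dν(r)`,
both integrals being absolutely convergent. -/
theorem gfun_integral_by_parts
    (μ ν : Measure ℝ) (hμ : IsProbabilityMeasure μ) (hν : IsProbabilityMeasure ν)
    (hμ0 : μ (Iic 0) = 0) (hν0 : ν (Iic 0) = 0)
    (hμmean : Integrable (fun x : ℝ => x) μ) (hνmean : Integrable (fun x : ℝ => x) ν)
    (m : ℕ) (hm : 1 ≤ m) (z t : Fin m → ℝ) (ht : ∀ j, 0 ≤ t j) :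
    Integrable (fun q : ℝ × ℝ × ℝ => gfun m z t q.1 q.2.1 q.2.2)
      (volume.prod (μ.prod ν)) ∧
    Integrable
      (fun q : ℝ × ℝ × ℝ =>
        Complex.I *
          (Complex.exp (Complex.I *
              ((∑ j, z j * q.2.2 * sessLen (t j) (q.1 - q.2.1) q.2.1 : ℝ) : ℂ)) - 1) *
          ((∑ k, z k * q.2.2 * (Icc (0 : ℝ) (t k)).indicator (fun _ => (1 : ℝ)) q.1 : ℝ) : ℂ) *
          (((μ (Ioi q.2.1)).toReal : ℝ) : ℂ))
      (volume.prod ((volume.restrict (Ioi (0 : ℝ))).prod ν)) ∧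
    (∫ q : ℝ × ℝ × ℝ, gfun m z t q.1 q.2.1 q.2.2 ∂(volume.prod (μ.prod ν)))
      = ∫ q : ℝ × ℝ × ℝ,
          Complex.I *
            (Complex.exp (Complex.I *
                ((∑ j, z j * q.2.2 * sessLen (t j) (q.1 - q.2.1) q.2.1 : ℝ) : ℂ)) - 1) *
            ((∑ k, z k * q.2.2 * (Icc (0 : ℝ) (t k)).indicator (fun _ => (1 : ℝ)) q.1 : ℝ) : ℂ) *
            (((μ (Ioi q.2.1)).toReal : ℝ) : ℂ)
          ∂(volume.prod ((volume.restrict (Ioi (0 : ℝ))).prod ν)) := by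
  haveI := hμ
  haveI := hν
  exact ⟨gfun_integrable hμmean hνmean z t ht,
    R_integrable z t hμ0 hμmean hνmean ht,
    main_eq z t hμ0 hνmean hμmean ht⟩
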